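/- Let 0 ≤ γ < 1 and 0 ≤ k ≤ 1. For every r with (1+γ)/(3+2k+γ) < r < 1, there exist h analytic on Ω_γ with |h(z)| ≤ 1 on Ω_γ and Taylor coefficients (a_n) at 0, and g analytic on Ω_γ with g(0) = 0, Taylor coefficients (b_n) at 0, and |g'(z)| ≤ k·|h'(z)| for all z ∈ 𝔻, such that Σ_{n≥0} |a_n| r^n + Σ_{n≥1} |b_n| r^n > 1. In other words, the radius (1+γ)/(3+2k+γ) in the harmonic Bohr inequality is best possible. -/

import Mathlib

open Complex

private lemma aux_real_abs (x : ℝ) (hx : 0 ≤ x) : ‖((x:ℝ):ℂ)‖ = x := by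
  rw [Complex.norm_real, Real.norm_of_nonneg hx]

private lemma aux_den (A : ℝ) (hA0 : 0 ≤ A) (hA1 : A < 1) (w : ℂ)
    (hw : ‖w‖ < 1) : (1 - (A:ℂ)*w) ≠ 0 := by
  intro h0
  have e : (A:ℂ)*w = 1 := by linear_combination -h0
  have habs := congrArg norm e
  rw [norm_mul, Complex.norm_real, Real.norm_of_nonneg hA0, norm_one] at habs
  nlinarith [norm_nonneg w]

private lemma aux_mod (A : ℝ) (hA0 : 0 ≤ A) (hA1 : A < 1) (w : ℂ)
    (hw1 : ‖w‖ < 1) :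
    ‖(A:ℂ) - w‖ ≤ ‖1 - (A:ℂ)*w‖ := by
  have hn : w.re^2 + w.im^2 < 1 := by
    have h := Complex.sq_norm w
    rw [Complex.normSq_apply] at h
    nlinarith [norm_nonneg w]
  have h1 : ‖(A:ℂ) - w‖ ^ 2 ≤ ‖1 - (A:ℂ)*w‖ ^2 := by
    rw [Complex.sq_norm, Complex.sq_norm, Complex.normSq_apply, Complex.normSq_apply]
    simp only [Complex.sub_re, Complex.sub_im, Complex.mul_re, Complex.mul_im,
      Complex.ofReal_re, Complex.ofReal_im, Complex.one_re, Complex.one_im]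
    have hA2 : 0 ≤ 1 - A^2 := by nlinarith
    have hw2 : 0 ≤ 1 - w.re^2 - w.im^2 := by linarith
    nlinarith [mul_nonneg hA2 hw2]
  nlinarith [norm_nonneg ((A:ℂ) - w),
    norm_nonneg (1 - (A:ℂ)*w), h1]

private lemma aux_rep (A γ z : ℂ) (h1 : 1 - A*γ ≠ 0)
    (h2 : 1 - A*((1-γ)*z+γ) ≠ 0)
    (h3 : 1 - (A*(1-γ)/(1-A*γ))*z ≠ 0) :
    (A - ((1-γ)*z+γ))/(1 - A*((1-γ)*z+γ))
      = -((1-γ)*(1-A^2)/(1-A*γ)^2)*z*(1 - (A*(1-γ)/(1-A*γ))*z)⁻¹ + (A-γ)/(1-A*γ) := by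
  have h3' : (1-A*γ) - A*(1-γ)*z ≠ 0 := by
    intro hc; apply h3
    field_simp
    linear_combination hc
  field_simp
  ring

private lemma aux_key2 (A γ k r a0 β c : ℝ) (h1Aγ : 0 < 1 - A*γ)
    (e1 : 1 - a0 = (1-A)*(1+γ)/(1-A*γ))
    (e2 : 1 - β*r = (1 - A*γ - A*(1-γ)*r)/(1-A*γ))
    (e3 : (1+k)*(c*r) = (1+k)*(1-γ)*(1-A^2)*r/(1-A*γ)^2)
    (step : (1-A)*((1+γ)*(1 - A*γ - A*(1-γ)*r)) < (1-A)*((1+k)*(1-γ)*(1+A)*r)) :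
    (1 - a0)*(1-β*r) < (1+k)*(c*r) := by
  rw [e1, e2, e3, div_mul_div_comm,
    div_lt_div_iff₀ (mul_pos h1Aγ h1Aγ) (pow_pos h1Aγ 2)]
  nlinarith [mul_lt_mul_of_pos_right step (pow_pos h1Aγ 2)]


/-- **Sharpness in Theorem 4.** Let `0 ≤ γ < 1` and `0 ≤ k ≤ 1`. For every `r` with
`(1+γ)/(3+2k+γ) < r < 1` there exist `h` analytic on `Ω_γ` with `|h| ≤ 1` and coefficients
`a_n`, and `g` analytic on `Ω_γ` with `g(0)=0`, coefficients `b_n`, and `|g'| ≤ k|h'|` on `𝔻`,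
such that `Σ |a_n| r^n + Σ_{n≥1} |b_n| r^n > 1`; hence `(1+γ)/(3+2k+γ)` is best possible. -/
theorem bohr_harmonic_omega_gamma_sharp (γ : ℝ) (hγ₀ : 0 ≤ γ) (hγ₁ : γ < 1)
    (k : ℝ) (hk₀ : 0 ≤ k) (hk₁ : k ≤ 1)
    (r : ℝ) (hr₀ : (1 + γ) / (3 + 2 * k + γ) < r) (hr₁ : r < 1) :
    ∃ (h g : ℂ → ℂ) (a b : ℕ → ℂ),
      DifferentiableOn ℂ h (Metric.ball (-(γ / (1 - γ)) : ℂ) (1 / (1 - γ))) ∧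
      (∀ z ∈ Metric.ball (-(γ / (1 - γ)) : ℂ) (1 / (1 - γ)), ‖h z‖ ≤ 1) ∧
      DifferentiableOn ℂ g (Metric.ball (-(γ / (1 - γ)) : ℂ) (1 / (1 - γ))) ∧
      g 0 = 0 ∧ b 0 = 0 ∧
      (∀ z ∈ Metric.ball (0 : ℂ) 1, HasSum (fun n => a n * z ^ n) (h z)) ∧
      (∀ z ∈ Metric.ball (0 : ℂ) 1, HasSum (fun n => b n * z ^ n) (g z)) ∧
      (∀ z ∈ Metric.ball (0 : ℂ) 1,
        ‖deriv g z‖ ≤ k * ‖deriv h z‖) ∧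
      1 < (∑' n : ℕ, ‖a n‖ * r ^ n)
        + (∑' n : ℕ, ‖b (n + 1)‖ * r ^ (n + 1)) := by
  have hγ' : 0 < 1 - γ := by linarith
  have hr0 : 0 < r := lt_trans (by positivity) hr₀
  -- choice of the parameter A
  obtain ⟨A, hAγ, hA1, hKey⟩ : ∃ A : ℝ, γ ≤ A ∧ A < 1 ∧
      (1 + γ) * (1 - A*γ - A*(1-γ)*r) < (1+k)*(1-γ)*(1+A)*r := by
    set F1 : ℝ := (1 - γ) * ((3 + 2*k + γ) * r - (1 + γ)) with hF1def
    set D : ℝ := (1 + k) * (1 - γ) * r + (1 + γ) * (γ + (1 - γ) * r) with hDdef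
    have hF1 : 0 < F1 := by
      have hden : 0 < 3 + 2*k + γ := by linarith
      have := (div_lt_iff₀ hden).mp hr₀
      have : 0 < (3 + 2*k + γ) * r - (1 + γ) := by linarith
      positivity
    have hD : 0 < D := by
      have h1 : 0 < (1 + k) * (1 - γ) * r := by positivity
      have h2 : 0 < γ + (1 - γ) * r := by positivity
      nlinarith
    refine ⟨max γ (1 - F1/(2*D)), le_max_left _ _, ?_, ?_⟩
    · apply max_lt hγ₁
      have : 0 < F1/(2*D) := by positivity
      linarith
    · set A : ℝ := max γ (1 - F1/(2*D)) with hAdef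
      have h1' : 1 - A ≤ F1/(2*D) := by
        have := le_max_right γ (1 - F1/(2*D)); linarith
      have h2 : (1-A)*D ≤ F1/2 := by
        calc (1-A)*D ≤ (F1/(2*D))*D := mul_le_mul_of_nonneg_right h1' hD.le
        _ = F1/2 := by field_simp
      have h3 : (1+k)*(1-γ)*(1+A)*r - (1+γ)*(1 - A*γ - A*(1-γ)*r) = F1 - (1-A)*D := by
        rw [hF1def, hDdef]; ring
      linarith
  clear hr₀
  have hA0 : 0 ≤ A := le_trans hγ₀ hAγ
  have h1Aγ : 0 < 1 - A*γ := by nlinarith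
  set β : ℝ := A*(1-γ)/(1-A*γ) with hβdef
  set c : ℝ := (1-γ)*(1-A^2)/(1-A*γ)^2 with hcdef
  set a0 : ℝ := (A-γ)/(1-A*γ) with ha0def
  have hβ0 : 0 ≤ β := div_nonneg (by nlinarith) h1Aγ.le
  have hβ1 : β < 1 := by
    rw [hβdef, div_lt_one h1Aγ]; nlinarith
  have hc0 : 0 ≤ c := div_nonneg (by nlinarith) (by positivity)
  have ha00 : 0 ≤ a0 := div_nonneg (by linarith) h1Aγ.le
  have hβr : β*r < 1 :=
    lt_of_le_of_lt (mul_le_of_le_one_right hβ0 hr₁.le) hβ1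
  have hβr0 : 0 < 1 - β*r := by linarith
  -- the functions
  set H : ℂ → ℂ := fun z => ((A:ℂ) - ((1-(γ:ℂ))*z + γ)) / (1 - (A:ℂ)*((1-(γ:ℂ))*z + γ)) with hHdef
  set G : ℂ → ℂ := fun z => (k:ℂ) * (H z - H 0) with hGdef
  set a : ℕ → ℂ := fun n => Nat.casesOn n ((a0 : ℝ) : ℂ) (fun m => -(c:ℂ) * (β:ℂ)^m) with hadef
  set b : ℕ → ℂ := fun n => Nat.casesOn n (0:ℂ) (fun m => (k:ℂ) * (-(c:ℂ) * (β:ℂ)^m)) with hbdef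
  have e2 : ‖1-(γ:ℂ)‖ = 1 - γ := by
    rw [show (1:ℂ)-(γ:ℂ) = ((1-γ:ℝ):ℂ) by push_cast; ring]
    exact aux_real_abs _ hγ'.le
  -- |w z| < 1 on Ω_γ
  have hw : ∀ z : ℂ, z ∈ Metric.ball (-(γ / (1 - γ)) : ℂ) (1 / (1 - γ)) →
      ‖(1-(γ:ℂ))*z + γ‖ < 1 := by
    intro z hz
    rw [Metric.mem_ball, Complex.dist_eq] at hz
    have e : (1-(γ:ℂ))*z + γ = (1-(γ:ℂ)) * (z - (-(↑γ / (1 - ↑γ)))) := by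
      have hne : (1:ℂ)-(γ:ℂ) ≠ 0 := by
        intro hc
        have : ((1-γ : ℝ):ℂ) = 0 := by push_cast; linear_combination hc
        exact (ne_of_gt hγ') (by exact_mod_cast this)
      field_simp
      ring
    rw [e, norm_mul, e2]
    calc (1-γ) * ‖z - (-(↑γ / (1-↑γ)))‖ < (1-γ) * (1/(1-γ)) :=
          mul_lt_mul_of_pos_left hz hγ'
    _ = 1 := by field_simp
  have hsub : Metric.ball (0:ℂ) 1 ⊆ Metric.ball (-(γ / (1 - γ)) : ℂ) (1 / (1 - γ)) := by
    intro z hz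
    rw [Metric.mem_ball, Complex.dist_eq] at *
    have h1 : ‖z‖ < 1 := by simpa using hz
    have h2 : ‖((↑γ / (1-↑γ)) : ℂ)‖ = γ/(1-γ) := by
      rw [norm_div, e2, aux_real_abs _ hγ₀]
    calc ‖z - (-(↑γ / (1-↑γ)))‖ ≤ ‖z‖ + ‖((↑γ / (1-↑γ)):ℂ)‖ := by
          rw [sub_neg_eq_add]; exact norm_add_le _ _
    _ < 1 + γ/(1-γ) := by rw [h2]; linarith
    _ = 1/(1-γ) := by field_simp; ring
  -- differentiability at points where |w|<1
  have hHdiff : ∀ z : ℂ, ‖(1-(γ:ℂ))*z + γ‖ < 1 → DifferentiableAt ℂ H z := by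
    intro z hz
    apply DifferentiableAt.div
    · fun_prop
    · fun_prop
    · exact aux_den A hA0 hA1 _ hz
  -- series representation
  have hβC : (β:ℂ) = (A:ℂ)*(1-(γ:ℂ))/(1-(A:ℂ)*(γ:ℂ)) := by rw [hβdef]; push_cast; ring
  have hcC : (c:ℂ) = (1-(γ:ℂ))*(1-(A:ℂ)^2)/(1-(A:ℂ)*(γ:ℂ))^2 := by rw [hcdef]; push_cast; ring
  have ha0C : (a0:ℂ) = ((A:ℂ)-(γ:ℂ))/(1-(A:ℂ)*(γ:ℂ)) := by rw [ha0def]; push_cast; ring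
  have h1AγC : ((1:ℂ) - (A:ℂ)*(γ:ℂ)) ≠ 0 := by
    intro hc
    have : ((1-A*γ : ℝ):ℂ) = 0 := by push_cast; linear_combination hc
    exact (ne_of_gt h1Aγ) (by exact_mod_cast this)
  have hHrep : ∀ z : ℂ, ‖z‖ < 1 →
      H z = -(c:ℂ)*z*(1-(β:ℂ)*z)⁻¹ + (a0:ℂ) := by
    intro z hz
    have hwz : ‖(1-(γ:ℂ))*z + γ‖ < 1 :=
      hw z (hsub (by simpa [Metric.mem_ball, Complex.dist_eq] using hz))
    have hd1 := aux_den A hA0 hA1 _ hwz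
    have hd2 : (1 - (β:ℂ)*z) ≠ 0 := by
      intro hc
      have e : ‖(β:ℂ)*z‖ = 1 := by
        have : (β:ℂ)*z = 1 := by linear_combination -hc
        rw [this, norm_one]
      rw [norm_mul, aux_real_abs _ hβ0] at e
      have : β * ‖z‖ < 1 :=
        lt_of_le_of_lt (mul_le_of_le_one_right hβ0 hz.le) hβ1
      linarith
    rw [hβC] at hd2
    simp only [hHdef]
    rw [hβC, hcC, ha0C]
    exact aux_rep (A:ℂ) (γ:ℂ) z h1AγC hd1 hd2
  have hH0 : H 0 = (a0:ℂ) := by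
    have := hHrep 0 (by simp)
    simpa using this
  -- HasSum for H
  have hHsum : ∀ z ∈ Metric.ball (0 : ℂ) 1, HasSum (fun n => a n * z ^ n) (H z) := by
    intro z hz
    have hz1 : ‖z‖ < 1 := by simpa [Metric.mem_ball, Complex.dist_eq] using hz
    have hβz : ‖(β:ℂ)*z‖ < 1 := by
      rw [norm_mul, Complex.norm_real, Real.norm_of_nonneg hβ0]
      exact lt_of_le_of_lt (mul_le_of_le_one_right hβ0 hz1.le) hβ1
    have hg := (hasSum_geometric_of_norm_lt_one hβz).mul_left (-(c:ℂ)*z)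
    have hg2 : HasSum (fun n => a (n+1) * z^(n+1)) (-(c:ℂ)*z * (1-(β:ℂ)*z)⁻¹) := by
      have e : (fun n => a (n+1) * z^(n+1)) = fun n => -(c:ℂ)*z * ((β:ℂ)*z)^n := by
        funext n
        show -(c:ℂ)*(β:ℂ)^n * z^(n+1) = _
        rw [mul_pow]; ring
      rw [e]; exact hg
    have hg3 := (hasSum_nat_add_iff (f := fun n => a n * z^n) 1).mp hg2
    have e0 : ∑ i ∈ Finset.range 1, a i * z ^ i = (a0:ℂ) := by simp [hadef]
    rw [e0] at hg3
    rw [hHrep z hz1]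
    exact hg3
  -- HasSum for G
  have hGsum : ∀ z ∈ Metric.ball (0 : ℂ) 1, HasSum (fun n => b n * z ^ n) (G z) := by
    intro z hz
    have hz1 : ‖z‖ < 1 := by simpa [Metric.mem_ball, Complex.dist_eq] using hz
    have hβz : ‖(β:ℂ)*z‖ < 1 := by
      rw [norm_mul, Complex.norm_real, Real.norm_of_nonneg hβ0]
      exact lt_of_le_of_lt (mul_le_of_le_one_right hβ0 hz1.le) hβ1
    have hg := (hasSum_geometric_of_norm_lt_one hβz).mul_left ((k:ℂ)*(-(c:ℂ)*z))
    have hg2 : HasSum (fun n => b (n+1) * z^(n+1)) ((k:ℂ)*(-(c:ℂ)*z) * (1-(β:ℂ)*z)⁻¹) := by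
      have e : (fun n => b (n+1) * z^(n+1)) = fun n => (k:ℂ)*(-(c:ℂ)*z) * ((β:ℂ)*z)^n := by
        funext n
        show (k:ℂ)*(-(c:ℂ)*(β:ℂ)^n) * z^(n+1) = _
        rw [mul_pow]; ring
      rw [e]; exact hg
    have hg3 := (hasSum_nat_add_iff (f := fun n => b n * z^n) 1).mp hg2
    have e0 : ∑ i ∈ Finset.range 1, b i * z ^ i = 0 := by simp [hbdef]
    rw [e0, add_zero] at hg3
    have eG : G z = (k:ℂ)*(-(c:ℂ)*z) * (1-(β:ℂ)*z)⁻¹ := by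
      simp only [hGdef]
      rw [hHrep z hz1, hH0]; ring
    rw [eG]
    exact hg3
  -- the coefficient moduli
  have habs0 : ‖a 0‖ = a0 := by
    show ‖((a0:ℝ):ℂ)‖ = a0
    exact aux_real_abs _ ha00
  have habsS : ∀ n : ℕ, ‖a (n+1)‖ = c * β^n := by
    intro n
    show ‖-(c:ℂ) * (β:ℂ)^n‖ = c * β^n
    rw [norm_mul, norm_pow, norm_neg, aux_real_abs _ hc0, aux_real_abs _ hβ0]
  have hbabsS : ∀ n : ℕ, ‖b (n+1)‖ = k * (c * β^n) := by
    intro n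
    show ‖(k:ℂ) * (-(c:ℂ) * (β:ℂ)^n)‖ = k * (c * β^n)
    rw [norm_mul, norm_mul, norm_pow, norm_neg, aux_real_abs _ hk₀,
      aux_real_abs _ hc0, aux_real_abs _ hβ0]
  have hgeo : HasSum (fun n : ℕ => (β*r)^n) (1-β*r)⁻¹ :=
    hasSum_geometric_of_lt_one (by positivity) hβr
  have hsum1 : HasSum (fun n => ‖a n‖ * r ^ n) (c*r*(1-β*r)⁻¹ + a0) := by
    have hg := hgeo.mul_left (c*r)
    have hg2 : HasSum (fun n => ‖a (n+1)‖ * r^(n+1)) (c*r*(1-β*r)⁻¹) := by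
      have e : (fun n => ‖a (n+1)‖ * r^(n+1)) = fun n => c*r * (β*r)^n := by
        funext n; rw [habsS n, mul_pow]; ring
      rw [e]; exact hg
    have hg3 := (hasSum_nat_add_iff (f := fun n => ‖a n‖ * r^n) 1).mp hg2
    have e0 : ∑ i ∈ Finset.range 1, ‖a i‖ * r ^ i = a0 := by
      simp [habs0]
    rwa [e0] at hg3
  have hsum2 : HasSum (fun n => ‖b (n+1)‖ * r ^ (n+1)) (k*(c*r*(1-β*r)⁻¹)) := by
    have hg := hgeo.mul_left (k*(c*r))
    have e : (fun n => ‖b (n+1)‖ * r^(n+1)) = fun n => k*(c*r) * (β*r)^n := by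
      funext n; rw [hbabsS n, mul_pow]; ring
    rw [e]
    rw [show k*(c*r*(1-β*r)⁻¹) = k*(c*r)*(1-β*r)⁻¹ by ring]
    exact hg
  -- the key numeric inequality
  have hfinal : 1 < (c*r*(1-β*r)⁻¹ + a0) + k*(c*r*(1-β*r)⁻¹) := by
    have hA1' : 0 < 1 - A := by linarith
    have step : (1-A)*((1+γ)*(1 - A*γ - A*(1-γ)*r)) < (1-A)*((1+k)*(1-γ)*(1+A)*r) :=
      mul_lt_mul_of_pos_left hKey hA1'
    have key2 : (1 - a0)*(1-β*r) < (1+k)*(c*r) := by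
      have e1 : 1 - a0 = (1-A)*(1+γ)/(1-A*γ) := by
        rw [ha0def]; field_simp; ring
      have e2' : 1 - β*r = (1 - A*γ - A*(1-γ)*r)/(1-A*γ) := by
        rw [hβdef]; field_simp
      have e3 : (1+k)*(c*r) = (1+k)*(1-γ)*(1-A^2)*r/(1-A*γ)^2 := by
        rw [hcdef]; field_simp
      exact aux_key2 A γ k r a0 β c h1Aγ e1 e2' e3 step
    have h5 : 1 - a0 < (1+k)*(c*r)*(1-β*r)⁻¹ := by
      rw [← lt_div_iff₀ hβr0] at key2
      calc 1 - a0 < (1+k)*(c*r)/(1-β*r) := key2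
      _ = (1+k)*(c*r)*(1-β*r)⁻¹ := by rw [div_eq_mul_inv]
    nlinarith [h5]
  refine ⟨H, G, a, b, ?_, ?_, ?_, ?_, ?_, hHsum, hGsum, ?_, ?_⟩
  · intro z hz
    exact (hHdiff z (hw z hz)).differentiableWithinAt
  · intro z hz
    have hwz := hw z hz
    show ‖((A:ℂ) - ((1-(γ:ℂ))*z + γ)) / (1 - (A:ℂ)*((1-(γ:ℂ))*z + γ))‖ ≤ 1
    rw [norm_div]
    have hdpos : 0 < ‖1 - (A:ℂ)*((1-(γ:ℂ))*z + γ)‖ := by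
      rw [norm_pos_iff]
      exact aux_den A hA0 hA1 _ hwz
    rw [div_le_one hdpos]
    exact aux_mod A hA0 hA1 _ hwz
  · intro z hz
    exact (((hHdiff z (hw z hz)).sub_const (H 0)).const_mul (k:ℂ)).differentiableWithinAt
  · show (k:ℂ) * (H 0 - H 0) = 0
    ring
  · rfl
  · intro z hz
    have hz1 : ‖(1-(γ:ℂ))*z + γ‖ < 1 := hw z (hsub hz)
    have hd := hHdiff z hz1
    have e : deriv G z = (k:ℂ) * deriv H z := by
      simp only [hGdef]
      rw [deriv_const_mul _ (hd.sub_const (H 0))]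
      rw [deriv_sub_const]
    rw [e, norm_mul, aux_real_abs _ hk₀]
  · rw [hsum1.tsum_eq, hsum2.tsum_eq]
    exact hfinal
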